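/- Let S₂, S₃, S₅, S₁₁ ∈ M₅(ℤ) be the four explicit integer matrices given in the context, and let R ⊆ M₅(ℤ) be the subring (with identity) generated by them. Then there is no column vector w ∈ ℤ⁵ such that {M·w : M ∈ R} = ℤ⁵. In other words, the module of integer column vectors ℤ⁵, with R acting by left multiplication, is not a cyclic R-module; in particular it is not isomorphic to R, i.e., it is not a free R-module of rank one. -/

import Mathlib

open Matrix

/-- The matrix by which the Hecke operator `T₂` acts on the character group `M₅` of `J₀(65)`. -/
def OggS2 : Matrix (Fin 5) (Fin 5) ℤ :=
  !![-1, -1, 1, 0, 0;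
     -1, -1, 0, 1, 0;
      2, -1, 0, 0, -1;
     -1,  2, 0, 0, -1;
      0,  0, 0, 0, -1]

/-- The matrix by which the Hecke operator `T₃` acts on the character group `M₅` of `J₀(65)`. -/
def OggS3 : Matrix (Fin 5) (Fin 5) ℤ :=
  !![ 0, -1, 0, 1, -1;
     -1,  0, 1, 0, -1;
     -1,  2, 1, 0, -2;
      2, -1, 0, 1, -2;
      0,  0, 0, 0, -2]

/-- The matrix by which the Hecke operator `T₅` acts on the character group `M₅` of `J₀(65)`. -/
def OggS5 : Matrix (Fin 5) (Fin 5) ℤ :=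
  !![0, 1, 0, 0, -1;
     1, 0, 0, 0, -1;
     0, 0, 0, 1, -1;
     0, 0, 1, 0, -1;
     0, 0, 0, 0, -1]

/-- The matrix by which the Hecke operator `T₁₁` acts on the character group `M₅` of `J₀(65)`. -/
def OggS11 : Matrix (Fin 5) (Fin 5) ℤ :=
  !![ 0,  3,  0, -1, 0;
      3,  0, -1,  0, 0;
      1, -2, -1,  2, 1;
     -2,  1,  2, -1, 1;
      0,  0,  0,  0, 2]

/-- The subring of `M₅(ℤ)` generated by `S₂, S₃, S₅, S₁₁` (a concrete model of the Hecke
algebra `𝐓` of level `65`). -/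
noncomputable def OggHeckeAlgebra : Subring (Matrix (Fin 5) (Fin 5) ℤ) :=
  Subring.closure {OggS2, OggS3, OggS5, OggS11}


namespace OggAux

def φ : Matrix (Fin 5) (Fin 5) ℤ →+* Matrix (Fin 5) (Fin 5) (ZMod 2) :=
  (Int.castRingHom (ZMod 2)).mapMatrix

def u1 : Fin 5 → ZMod 2 := ![0, 0, 0, 0, 1]
def u2 : Fin 5 → ZMod 2 := ![1, 1, 1, 1, 0]

def P (M : Matrix (Fin 5) (Fin 5) ℤ) : Prop :=
  ∃ c : ZMod 2, u1 ᵥ* φ M = c • u1 ∧ u2 ᵥ* φ M = c • u2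

lemma hgen : ∀ M ∈ ({OggS2, OggS3, OggS5, OggS11} :
    Set (Matrix (Fin 5) (Fin 5) ℤ)), P M := by
  rintro M (rfl | rfl | rfl | rfl)
  · exact ⟨1, by decide, by decide⟩
  · exact ⟨0, by decide, by decide⟩
  · exact ⟨1, by decide, by decide⟩
  · exact ⟨0, by decide, by decide⟩

lemma hP {M : Matrix (Fin 5) (Fin 5) ℤ} (hM : M ∈ OggHeckeAlgebra) : P M := by
  induction hM using Subring.closure_induction with
  | mem x hx => exact hgen x hx
  | zero => exact ⟨0, by simp, by simp⟩
  | one => exact ⟨1, by simp [_root_.map_one, Matrix.vecMul_one], by simp [_root_.map_one, Matrix.vecMul_one]⟩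
  | add x y hx hy px py =>
    obtain ⟨c, h1, h2⟩ := px; obtain ⟨d, k1, k2⟩ := py
    exact ⟨c + d, by simp [map_add, Matrix.vecMul_add, h1, k1, add_smul],
      by simp [map_add, Matrix.vecMul_add, h2, k2, add_smul]⟩
  | neg x hx px =>
    obtain ⟨c, h1, h2⟩ := px
    exact ⟨-c, by rw [map_neg, Matrix.vecMul_neg, h1, neg_smul],
      by rw [map_neg, Matrix.vecMul_neg, h2, neg_smul]⟩
  | mul x y hx hy px py =>
    obtain ⟨c, h1, h2⟩ := px; obtain ⟨d, k1, k2⟩ := py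
    refine ⟨c * d, ?_, ?_⟩
    · rw [_root_.map_mul, ← Matrix.vecMul_vecMul, h1, Matrix.smul_vecMul, k1, smul_smul]
    · rw [_root_.map_mul, ← Matrix.vecMul_vecMul, h2, Matrix.smul_vecMul, k2, smul_smul]

lemma key {M : Matrix (Fin 5) (Fin 5) ℤ} (hM : M ∈ OggHeckeAlgebra) (w : Fin 5 → ℤ)
    (u : Fin 5 → ZMod 2) (c : ZMod 2) (hu : u ᵥ* φ M = c • u) :
    u ⬝ᵥ (fun i => ((M.mulVec w i : ℤ) : ZMod 2)) = c * (u ⬝ᵥ fun i => ((w i : ℤ) : ZMod 2)) := by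
  have : (fun i => ((M.mulVec w i : ℤ) : ZMod 2)) = (φ M) *ᵥ (fun i => ((w i : ℤ) : ZMod 2)) := by
    funext i
    exact RingHom.map_mulVec (Int.castRingHom (ZMod 2)) M w i
  rw [this, Matrix.dotProduct_mulVec, hu, smul_dotProduct, smul_eq_mul]

end OggAux

/-- There is no column vector `w ∈ ℤ⁵` such that `{M ⬝ w : M ∈ R} = ℤ⁵`, where `R` is the
subring of `M₅(ℤ)` generated by the four Hecke matrices `S₂, S₃, S₅, S₁₁`: the module of
integer column vectors with `R` acting by left multiplication is not a cyclic `R`-module, so in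
particular it is not a free `R`-module of rank one.  (This is the concrete content of the
remark that the `ℤ`-dual `M₅*` of the character group of `J₀(65)` at `5` is not free over the
Hecke algebra of level `65`.) -/

theorem ogg_stmt5 :
    ¬ ∃ w : Fin 5 → ℤ,
      {v : Fin 5 → ℤ | ∃ M ∈ OggHeckeAlgebra, M.mulVec w = v} = Set.univ := by
  rintro ⟨w, hw⟩
  set w2 : Fin 5 → ZMod 2 := fun i => ((w i : ℤ) : ZMod 2) with hw2
  -- e₄ is in the orbit
  have hA : (![0,0,0,0,1] : Fin 5 → ℤ) ∈
      {v : Fin 5 → ℤ | ∃ M ∈ OggHeckeAlgebra, M.mulVec w = v} := hw ▸ Set.mem_univ _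
  have hB : (![1,0,0,0,0] : Fin 5 → ℤ) ∈
      {v : Fin 5 → ℤ | ∃ M ∈ OggHeckeAlgebra, M.mulVec w = v} := hw ▸ Set.mem_univ _
  obtain ⟨M, hM, hMv⟩ := hA
  obtain ⟨N, hN, hNv⟩ := hB
  obtain ⟨c, hc1, hc2⟩ := OggAux.hP hM
  obtain ⟨d, _, hd2⟩ := OggAux.hP hN
  have e1 := OggAux.key hM w OggAux.u1 c hc1
  have e2 := OggAux.key hM w OggAux.u2 c hc2
  have e3 := OggAux.key hN w OggAux.u2 d hd2
  rw [hMv] at e1 e2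
  rw [hNv] at e3
  have v1 : OggAux.u1 ⬝ᵥ (fun i => (((![0,0,0,0,1] : Fin 5 → ℤ) i : ℤ) : ZMod 2)) = 1 := by
    decide
  have v2 : OggAux.u2 ⬝ᵥ (fun i => (((![0,0,0,0,1] : Fin 5 → ℤ) i : ℤ) : ZMod 2)) = 0 := by
    decide
  have v3 : OggAux.u2 ⬝ᵥ (fun i => (((![1,0,0,0,0] : Fin 5 → ℤ) i : ℤ) : ZMod 2)) = 1 := by
    decide
  rw [v1] at e1; rw [v2] at e2; rw [v3] at e3
  have fin : ∀ x y z t : ZMod 2, 1 = x * y → 0 = x * z → 1 = t * z → False := by decide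
  exact fin c _ _ d e1 e2 e3
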